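/- If T is a maximal monotone operator with nonempty domain on a reflexive Banach space X, then Tx = ∂̄L_T(x) = δL_T(x) for every x, where L_T is the Fitzpatrick function of T. -/

import Mathlib

open NormedSpace

/-- The Fitzpatrick function of `T`. -/
noncomputable def Fitz {X : Type*} [NormedAddCommGroup X] [NormedSpace ℝ X]
    (T : X → Set (StrongDual ℝ X)) (z : X × StrongDual ℝ X) : EReal :=
  ⨆ yq : {yq : X × StrongDual ℝ X // yq.2 ∈ T yq.1},
    ((z.2 yq.1.1 + yq.1.2 (z.1 - yq.1.1) : ℝ) : EReal)

lemma Fitz_eq_of_mem {X : Type*} [NormedAddCommGroup X] [NormedSpace ℝ X]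
    (T : X → Set (StrongDual ℝ X))
    (hmono : ∀ x y : X, ∀ p q : StrongDual ℝ X, p ∈ T x → q ∈ T y → 0 ≤ (p - q) (x - y))
    {x : X} {p : StrongDual ℝ X} (hp : p ∈ T x) :
    Fitz T (x, p) = ((p x : ℝ) : EReal) := by
  apply le_antisymm
  · apply iSup_le
    rintro ⟨⟨y, q⟩, hq⟩
    have h0 := hmono x y p q hp hq
    simp only [ContinuousLinearMap.sub_apply, map_sub] at h0
    have : (p y + q (x - y) : ℝ) ≤ p x := by
      simp only [map_sub]; linarith
    exact_mod_cast this
  · have h : ((p x + p (x - x) : ℝ) : EReal) ≤ Fitz T (x, p) :=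
      le_iSup (fun yq : {yq : X × StrongDual ℝ X // yq.2 ∈ T yq.1} =>
        ((p yq.1.1 + yq.1.2 (x - yq.1.1) : ℝ) : EReal)) ⟨(x, p), hp⟩
    simpa using h

lemma Fitz_ge {X : Type*} [NormedAddCommGroup X] [NormedSpace ℝ X]
    (T : X → Set (StrongDual ℝ X))
    (hmono : ∀ x y : X, ∀ p q : StrongDual ℝ X, p ∈ T x → q ∈ T y → 0 ≤ (p - q) (x - y))
    (hmax : ∀ x : X, ∀ p : StrongDual ℝ X,
      (∀ y : X, ∀ q : StrongDual ℝ X, q ∈ T y → 0 ≤ (p - q) (x - y)) → p ∈ T x)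
    (x : X) (p : StrongDual ℝ X) :
    ((p x : ℝ) : EReal) ≤ Fitz T (x, p) := by
  by_contra hlt
  push_neg at hlt
  have hp : p ∈ T x := by
    apply hmax
    intro y q hq
    have hle : ((p y + q (x - y) : ℝ) : EReal) ≤ Fitz T (x, p) :=
      le_iSup (fun yq : {yq : X × StrongDual ℝ X // yq.2 ∈ T yq.1} =>
        ((p yq.1.1 + yq.1.2 (x - yq.1.1) : ℝ) : EReal)) ⟨(y, q), hq⟩
    have : ((p y + q (x - y) : ℝ) : EReal) < ((p x : ℝ) : EReal) := lt_of_le_of_lt hle hlt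
    have hr : (p y + q (x - y) : ℝ) < p x := by exact_mod_cast this
    simp only [map_sub] at hr
    simp only [ContinuousLinearMap.sub_apply, map_sub]
    linarith
  rw [Fitz_eq_of_mem T hmono hp] at hlt
  exact lt_irrefl _ hlt

/-- If `T` is maximal monotone with nonempty domain, then
`Tx = ∂̄L_T(x) = δL_T(x)` for every `x`, where `L_T` is the Fitzpatrick function. -/
theorem stmt10 {X : Type*} [NormedAddCommGroup X] [NormedSpace ℝ X] [CompleteSpace X]
    (hrefl : Function.Surjective (NormedSpace.inclusionInDoubleDual ℝ X))
    (T : X → Set (StrongDual ℝ X))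
    (hmono : ∀ x y : X, ∀ p q : StrongDual ℝ X, p ∈ T x → q ∈ T y → 0 ≤ (p - q) (x - y))
    (hmax : ∀ x : X, ∀ p : StrongDual ℝ X,
      (∀ y : X, ∀ q : StrongDual ℝ X, q ∈ T y → 0 ≤ (p - q) (x - y)) → p ∈ T x)
    (hdom : ∃ x, (T x).Nonempty) :
    ∀ x : X, ∀ p : StrongDual ℝ X,
      (p ∈ T x ↔ Fitz T (x, p) = ((p x : ℝ) : EReal)) ∧
      (p ∈ T x ↔
        ∀ y q, Fitz T (x, p) + ((p (y - x) + (q - p) x : ℝ) : EReal) ≤ Fitz T (y, q)) := by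
  intro x p
  constructor
  · constructor
    · exact fun hp => Fitz_eq_of_mem T hmono hp
    · intro heq
      apply hmax
      intro y q hq
      have hle : ((p y + q (x - y) : ℝ) : EReal) ≤ Fitz T (x, p) :=
        le_iSup (fun yq : {yq : X × StrongDual ℝ X // yq.2 ∈ T yq.1} =>
          ((p yq.1.1 + yq.1.2 (x - yq.1.1) : ℝ) : EReal)) ⟨(y, q), hq⟩
      rw [heq] at hle
      have hr : (p y + q (x - y) : ℝ) ≤ p x := by exact_mod_cast hle
      simp only [map_sub] at hr
      simp only [ContinuousLinearMap.sub_apply, map_sub]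
      linarith
  · constructor
    · intro hp y q
      rw [Fitz_eq_of_mem T hmono hp]
      have hle : ((q x + p (y - x) : ℝ) : EReal) ≤ Fitz T (y, q) :=
        le_iSup (fun yq : {yq : X × StrongDual ℝ X // yq.2 ∈ T yq.1} =>
          ((q yq.1.1 + yq.1.2 (y - yq.1.1) : ℝ) : EReal)) ⟨(x, p), hp⟩
      have heq : ((p x : ℝ) : EReal) + ((p (y - x) + (q - p) x : ℝ) : EReal)
          = ((q x + p (y - x) : ℝ) : EReal) := by
        rw [← EReal.coe_add]
        norm_cast
        simp only [ContinuousLinearMap.sub_apply, map_sub]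
        ring
      rw [heq]
      exact hle
    · intro h
      apply hmax
      intro y q hq
      have h1 := h y q
      rw [Fitz_eq_of_mem T hmono hq] at h1
      have h2 : ((p x : ℝ) : EReal) + ((p (y - x) + (q - p) x : ℝ) : EReal)
          ≤ ((q y : ℝ) : EReal) :=
        le_trans (add_le_add_left (Fitz_ge T hmono hmax x p) _) h1
      rw [← EReal.coe_add] at h2
      have hr : (p x + (p (y - x) + (q - p) x) : ℝ) ≤ q y := by exact_mod_cast h2
      simp only [ContinuousLinearMap.sub_apply, map_sub] at hr
      simp only [ContinuousLinearMap.sub_apply, map_sub]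
      linarith
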